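/- Every finite nonempty simple graph G without isolated vertices satisfies χ'_sCF(G) ≤ 3⌈log₂ χ(G)⌉, where χ(G) denotes the chromatic number of G. -/

import Mathlib

open SimpleGraph

set_option linter.unusedSectionVars false

/-- An edge `e` is *satisfied* by the colouring `c` of (the edges of) the graph `H` if some
colour is assigned by `c` to exactly one edge of `H` incident to an endpoint of `e`. -/
def CFSatisfies {V : Type*} {k : ℕ} (H : SimpleGraph V) (c : Sym2 V → Fin k) (e : Sym2 V) :
    Prop :=
  ∃ col : Fin k, ∃! f : Sym2 V, f ∈ H.edgeSet ∧ (∃ x ∈ e, x ∈ f) ∧ c f = col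

/-- The conflict-free chromatic index `χ'_CF(G)`: the least `k` such that `G` admits an edge
colouring with `k` colours in which every edge of `G` is satisfied. -/
noncomputable def cfChromIndex {V : Type*} (G : SimpleGraph V) : ℕ :=
  sInf {k | ∃ c : Sym2 V → Fin k, ∀ e ∈ G.edgeSet, CFSatisfies G c e}

/-- The parameter `χ'_sCF(G)`: the least `k` for which some subgraph `H` of `G` admits an edge
colouring with `k` colours such that every edge of `G` is satisfied. -/
noncomputable def scfChromIndex {V : Type*} (G : SimpleGraph V) : ℕ :=
  sInf {k | ∃ H : SimpleGraph V, H ≤ G ∧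
    ∃ c : Sym2 V → Fin k, ∀ e ∈ G.edgeSet, CFSatisfies H c e}

namespace CFAux

variable {V : Type*}

/-- The level of a pair: the position of the highest differing bit of `ψ x` and `ψ y`. -/
def lvl (ψ : V → ℕ) (x y : V) : ℕ := Nat.log 2 (ψ x ^^^ ψ y)

def bitAt (ψ : V → ℕ) (i : ℕ) (v : V) : Bool := (ψ v).testBit i

lemma lvl_symm (ψ : V → ℕ) (x y : V) : lvl ψ x y = lvl ψ y x := by
  rw [lvl, lvl, Nat.xor_comm]

lemma testBit_log_self {d : ℕ} (hd : d ≠ 0) : d.testBit (Nat.log 2 d) = true := by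
  have h1 : 2 ^ Nat.log 2 d ≤ d := Nat.pow_log_le_self 2 hd
  have h2 : d < 2 ^ (Nat.log 2 d + 1) := Nat.lt_pow_succ_log_self one_lt_two d
  have hdiv : d / 2 ^ Nat.log 2 d = 1 := by
    refine Nat.div_eq_of_lt_le (by simpa using h1) ?_
    have : 2 ^ (Nat.log 2 d + 1) = (1 + 1) * 2 ^ Nat.log 2 d := by ring
    omega
  simp [Nat.testBit_eq_decide_div_mod_eq, hdiv]

lemma bit_ne {ψ : V → ℕ} {x y : V} (h : ψ x ≠ ψ y) :
    bitAt ψ (lvl ψ x y) x ≠ bitAt ψ (lvl ψ x y) y := by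
  have hd : ψ x ^^^ ψ y ≠ 0 := by simpa [Nat.xor_eq_zero_iff] using h
  have ht := testBit_log_self hd
  rw [Nat.testBit_xor] at ht
  intro hEq
  rw [bitAt, bitAt] at hEq
  rw [show lvl ψ x y = Nat.log 2 (ψ x ^^^ ψ y) from rfl] at hEq
  rw [hEq] at ht
  simp at ht

lemma lvl_lt {ψ : V → ℕ} {t : ℕ} {x y : V} (hx : ψ x < 2 ^ t) (hy : ψ y < 2 ^ t)
    (h : ψ x ≠ ψ y) : lvl ψ x y < t := by
  have hd : ψ x ^^^ ψ y ≠ 0 := by simpa [Nat.xor_eq_zero_iff] using h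
  have h1 : 2 ^ lvl ψ x y ≤ ψ x ^^^ ψ y := Nat.ge_two_pow_of_testBit (testBit_log_self hd)
  have h2 : ψ x ^^^ ψ y < 2 ^ t := by
    refine Nat.lt_pow_two_of_testBit _ fun i hi => ?_
    rw [Nat.testBit_xor,
      Nat.testBit_eq_false_of_lt (lt_of_lt_of_le hx (Nat.pow_le_pow_right (by norm_num) hi)),
      Nat.testBit_eq_false_of_lt (lt_of_lt_of_le hy (Nat.pow_le_pow_right (by norm_num) hi))]
    rfl
  exact (Nat.pow_lt_pow_iff_right one_lt_two).1 (lt_of_le_of_lt h1 h2)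


open scoped Classical in
/-- `b` is a petal candidate at level `i`. -/
def Cand (G : SimpleGraph V) (ψ : V → ℕ) (b : V) (i : ℕ) : Prop :=
  bitAt ψ i b = true ∧ ∃ a, G.Adj a b ∧ lvl ψ a b = i

def Valid (G : SimpleGraph V) (ψ : V → ℕ) (p : V → ℕ → V) : Prop :=
  ∀ b i, Cand G ψ b i → G.Adj (p b i) b ∧ lvl ψ (p b i) b = i

open scoped Classical in
/-- The petals assigned to center `z` at level `i`. -/
noncomputable def petal [Fintype V] (G : SimpleGraph V) (ψ : V → ℕ) (p : V → ℕ → V)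
    (z : V) (i : ℕ) : Finset V :=
  Finset.univ.filter fun b =>
    bitAt ψ i b = true ∧ G.Adj z b ∧ lvl ψ z b = i ∧ p b i = z

lemma mem_petal [Fintype V] {G : SimpleGraph V} {ψ : V → ℕ} {p : V → ℕ → V} {z b : V} {i : ℕ} :
    b ∈ petal G ψ p z i ↔
      bitAt ψ i b = true ∧ G.Adj z b ∧ lvl ψ z b = i ∧ p b i = z := by
  simp [petal]

/-- Rank of a petal within a star. -/
def rank [LinearOrder V] (P : Finset V) (w : V) : ℕ :=
  if P.card ≤ 1 then 2 else min ((P.sort (· ≤ ·)).idxOf w) 2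

lemma rank_le_two [LinearOrder V] (P : Finset V) (w : V) : rank P w ≤ 2 := by
  rw [rank]; split
  · omega
  · exact min_le_right _ _

lemma rank_of_card_le_one [LinearOrder V] {P : Finset V} (h : P.card ≤ 1) (w : V) :
    rank P w = 2 := if_pos h

lemma rank_inj [LinearOrder V] {P : Finset V} {w w' : V} (hw : w ∈ P) (hw' : w' ∈ P)
    (h : rank P w = rank P w') (h2 : rank P w ≠ 2) : w = w' := by
  unfold rank at h h2
  by_cases hc : P.card ≤ 1
  · simp [hc] at h2
  · simp only [if_neg hc, Nat.min_def] at h h2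
    split_ifs at h h2 <;>
      first
        | omega
        | exact (List.idxOf_inj ((Finset.mem_sort _).2 hw)).1 h

lemma rank_exists [LinearOrder V] {P : Finset V} (h2 : 2 ≤ P.card) {r : ℕ} (hr : r < 2) :
    ∃ w ∈ P, rank P w = r := by
  set l := P.sort (· ≤ ·) with hl
  have hlen : l.length = P.card := Finset.length_sort _
  have hrlen : r < l.length := by omega
  refine ⟨l.get ⟨r, hrlen⟩, (Finset.mem_sort _).1 (l.get_mem _), ?_⟩
  have hmem : l.get ⟨r, hrlen⟩ ∈ l := l.get_mem _
  have hidx : l.idxOf (l.get ⟨r, hrlen⟩) < l.length := List.idxOf_lt_length_iff.2 hmem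
  have hget : l.get ⟨l.idxOf (l.get ⟨r, hrlen⟩), hidx⟩ = l.get ⟨r, hrlen⟩ :=
    List.idxOf_get hidx
  have hnd : l.Nodup := P.sort_nodup _
  have h3 : l.idxOf (l.get ⟨r, hrlen⟩) = r :=
    congrArg Fin.val ((List.Nodup.get_inj_iff hnd).1 hget)
  rw [rank, if_neg (by omega), ← hl, h3]
  exact Nat.min_eq_left (by omega)

open scoped Classical in
/-- Number of singleton stars. -/
noncomputable def Nsing [Fintype V] (G : SimpleGraph V) (ψ : V → ℕ) (t : ℕ)
    (p : V → ℕ → V) : ℕ :=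
  ∑ zi ∈ Finset.univ ×ˢ Finset.range t,
    (if (petal G ψ p zi.1 zi.2).card = 1 then 1 else 0)

/-- The chosen edge family. -/
def Efam (G : SimpleGraph V) (ψ : V → ℕ) (p : V → ℕ → V) : Set (Sym2 V) :=
  {e | ∃ b i, Cand G ψ b i ∧ e = s(p b i, b)}

/-- Colour value of an (ordered) pair. -/
noncomputable def pairVal [Fintype V] [LinearOrder V] (G : SimpleGraph V) (ψ : V → ℕ)
    (p : V → ℕ → V) (x y : V) : ℕ :=
  3 * lvl ψ x y +
    rank (petal G ψ p
      (if bitAt ψ (lvl ψ x y) x = bitAt ψ (lvl ψ x y) y then max x y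
        else if bitAt ψ (lvl ψ x y) x = true then y else x) (lvl ψ x y))
      (if bitAt ψ (lvl ψ x y) x = bitAt ψ (lvl ψ x y) y then min x y
        else if bitAt ψ (lvl ψ x y) x = true then x else y)

lemma pairVal_symm [Fintype V] [LinearOrder V] (G : SimpleGraph V) (ψ : V → ℕ)
    (p : V → ℕ → V) (x y : V) : pairVal G ψ p x y = pairVal G ψ p y x := by
  unfold pairVal
  rw [lvl_symm ψ y x]
  by_cases h : bitAt ψ (lvl ψ x y) x = bitAt ψ (lvl ψ x y) y
  · rw [if_pos h, if_pos h.symm, if_pos h, if_pos h.symm, max_comm, min_comm]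
  · rw [if_neg h, if_neg (Ne.symm h), if_neg h, if_neg (Ne.symm h)]
    cases hx : bitAt ψ (lvl ψ x y) x
    · have hy : bitAt ψ (lvl ψ x y) y = true := by
        cases hy : bitAt ψ (lvl ψ x y) y
        · exact absurd (hx.trans hy.symm) h
        · rfl
      simp [hx, hy]
    · have hy : bitAt ψ (lvl ψ x y) y = false := by
        cases hy : bitAt ψ (lvl ψ x y) y
        · rfl
        · exact absurd (hx.trans hy.symm) h
      simp [hx, hy]

/-- Colour value on unordered pairs. -/
noncomputable def cval [Fintype V] [LinearOrder V] (G : SimpleGraph V) (ψ : V → ℕ)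
    (p : V → ℕ → V) : Sym2 V → ℕ :=
  Sym2.lift ⟨pairVal G ψ p, pairVal_symm G ψ p⟩


section Main

variable [Fintype V] [LinearOrder V] {G : SimpleGraph V} {ψ : V → ℕ} {t : ℕ} {p : V → ℕ → V}

lemma cand_lvl_lt (hprop : ∀ {u v : V}, G.Adj u v → ψ u ≠ ψ v) (hψ : ∀ v, ψ v < 2 ^ t)
    {b : V} {i : ℕ} (hc : Cand G ψ b i) : i < t := by
  obtain ⟨-, a, hadj, hl⟩ := hc
  exact hl ▸ lvl_lt (hψ a) (hψ b) (hprop hadj)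

lemma cval_edge (hprop : ∀ {u v : V}, G.Adj u v → ψ u ≠ ψ v) (hv : Valid G ψ p)
    {b : V} {i : ℕ} (hc : Cand G ψ b i) :
    cval G ψ p s(p b i, b) = 3 * i + rank (petal G ψ p (p b i) i) b := by
  obtain ⟨hA, hL⟩ := hv b i hc
  have hne := bit_ne (ψ := ψ) (hprop hA)
  rw [hL] at hne
  have hb : bitAt ψ i b = true := hc.1
  have ha : bitAt ψ i (p b i) = false := by
    cases hx : bitAt ψ i (p b i)
    · rfl
    · exact absurd (hx.trans hb.symm) hne
  show pairVal G ψ p (p b i) b = _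
  unfold pairVal
  rw [hL, ha, hb]
  simp

lemma H_le (hv : Valid G ψ p) : SimpleGraph.fromEdgeSet (Efam G ψ p) ≤ G := by
  intro u v huv
  rw [SimpleGraph.fromEdgeSet_adj] at huv
  obtain ⟨⟨b, i, hc, he⟩, hne⟩ := huv
  have hA := (hv b i hc).1
  rw [Sym2.eq_iff] at he
  rcases he with ⟨h1, h2⟩ | ⟨h1, h2⟩
  · subst h1; subst h2; exact hA
  · subst h1; subst h2; exact hA.symm

lemma mem_H_edgeSet (hv : Valid G ψ p) {b : V} {i : ℕ} (hc : Cand G ψ b i) :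
    s(p b i, b) ∈ (SimpleGraph.fromEdgeSet (Efam G ψ p)).edgeSet := by
  rw [SimpleGraph.edgeSet_fromEdgeSet]
  exact ⟨⟨b, i, hc, rfl⟩, by simp [Sym2.isDiag_iff_proj_eq, (hv b i hc).1.ne]⟩

lemma exists_of_mem_H {f : Sym2 V}
    (hf : f ∈ (SimpleGraph.fromEdgeSet (Efam G ψ p)).edgeSet) :
    ∃ b i, Cand G ψ b i ∧ f = s(p b i, b) := by
  rw [SimpleGraph.edgeSet_fromEdgeSet] at hf
  obtain ⟨⟨b, i, hc, he⟩, -⟩ := hf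
  exact ⟨b, i, hc, he⟩

lemma no_bad (hprop : ∀ {u v : V}, G.Adj u v → ψ u ≠ ψ v) (hψ : ∀ v, ψ v < 2 ^ t)
    (hv : Valid G ψ p) (hmin : ∀ q, Valid G ψ q → Nsing G ψ t p ≤ Nsing G ψ t q)
    {a b : V} (hadj : G.Adj a b) (hbit : bitAt ψ (lvl ψ a b) b = true)
    (hza : p b (lvl ψ a b) ≠ a) (h1 : (petal G ψ p a (lvl ψ a b)).card = 1) :
    rank (petal G ψ p (p b (lvl ψ a b)) (lvl ψ a b)) b ≠ 2 := by
  intro hrk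
  set L := lvl ψ a b with hLdef
  set z := p b L with hzdef
  have hCb : Cand G ψ b L := ⟨hbit, a, hadj, rfl⟩
  have hvz := hv b L hCb
  have hbPz : b ∈ petal G ψ p z L := mem_petal.2 ⟨hbit, hvz.1, hvz.2, rfl⟩
  set q : V → ℕ → V := fun b' i => if b' = b ∧ i = L then a else p b' i with hqdef
  have hq_at : q b L = a := by simp [hqdef]
  have hq_ne : ∀ b' i, ¬(b' = b ∧ i = L) → q b' i = p b' i := by
    intro b' i h; simp only [hqdef, if_neg h]
  have hvq : Valid G ψ q := by
    intro b' i hc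
    by_cases h : b' = b ∧ i = L
    · obtain ⟨rfl, rfl⟩ := h
      rw [hq_at]
      exact ⟨hadj, rfl⟩
    · rw [hq_ne _ _ h]; exact hv b' i hc
  have hpet_other : ∀ z' i, (i ≠ L ∨ (z' ≠ a ∧ z' ≠ z)) →
      petal G ψ q z' i = petal G ψ p z' i := by
    intro z' i h
    ext b'
    rw [mem_petal, mem_petal]
    by_cases hb' : b' = b ∧ i = L
    · obtain ⟨rfl, rfl⟩ := hb'
      rcases h with h | ⟨hza', hzz'⟩
      · exact absurd rfl h
      · rw [hq_at]
        constructor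
        · rintro ⟨_, _, _, h4⟩; exact absurd h4.symm hza'
        · rintro ⟨_, _, _, h4⟩; exact absurd h4.symm hzz'
    · rw [hq_ne _ _ hb']
  have hb_notin_Pa : b ∉ petal G ψ p a L := fun h => hza (mem_petal.1 h).2.2.2
  have hPa_q : petal G ψ q a L = insert b (petal G ψ p a L) := by
    ext b'
    rw [mem_petal, Finset.mem_insert, mem_petal]
    by_cases hb' : b' = b
    · subst hb'
      constructor
      · intro _; exact Or.inl rfl
      · intro _; exact ⟨hbit, hadj, rfl, hq_at⟩
    · rw [hq_ne _ _ (by tauto)]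
      simp [hb']
  have hcard_Pa_q : (petal G ψ q a L).card = 2 := by
    rw [hPa_q, Finset.card_insert_of_notMem hb_notin_Pa, h1]
  have hPz_q : petal G ψ q z L = (petal G ψ p z L).erase b := by
    ext b'
    rw [mem_petal, Finset.mem_erase, mem_petal]
    by_cases hb' : b' = b
    · subst hb'
      rw [hq_at]
      constructor
      · rintro ⟨_, _, _, h4⟩; exact absurd h4.symm hza
      · rintro ⟨hne, _⟩; exact absurd rfl hne
    · rw [hq_ne _ _ (by tauto)]
      simp [hb']
  have hPz_card : (petal G ψ p z L).card - 1 ≠ 1 := by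
    unfold rank at hrk
    by_cases hc : (petal G ψ p z L).card ≤ 1
    · have : 0 < (petal G ψ p z L).card := Finset.card_pos.2 ⟨b, hbPz⟩
      omega
    · rw [if_neg hc] at hrk
      have hidx : ((petal G ψ p z L).sort (· ≤ ·)).idxOf b <
          ((petal G ψ p z L).sort (· ≤ ·)).length :=
        List.idxOf_lt_length_iff.2 ((Finset.mem_sort _).2 hbPz)
      rw [Finset.length_sort] at hidx
      rw [Nat.min_def] at hrk
      split_ifs at hrk <;> omega
  have hq_sing : (petal G ψ q z L).card ≠ 1 := by
    rw [hPz_q, Finset.card_erase_of_mem hbPz]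
    exact hPz_card
  have hL_lt : L < t := lvl_lt (hψ a) (hψ b) (hprop hadj)
  have hlt : Nsing G ψ t q < Nsing G ψ t p := by
    unfold Nsing
    apply Finset.sum_lt_sum
    · rintro ⟨z', i⟩ -
      by_cases h : i = L
      · subst h
        by_cases h2 : z' = a
        · subst h2
          simp [hcard_Pa_q]
        · by_cases h3 : z' = z
          · subst h3
            simp [hq_sing]
          · rw [hpet_other _ _ (Or.inr ⟨h2, h3⟩)]
      · rw [hpet_other _ _ (Or.inl h)]
    · refine ⟨(a, L), by simp [Finset.mem_product, hL_lt], ?_⟩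
      simp [hcard_Pa_q, h1]
  exact absurd (hmin q hvq) (by omega)

lemma sat (hprop : ∀ {u v : V}, G.Adj u v → ψ u ≠ ψ v) (hψ : ∀ v, ψ v < 2 ^ t)
    (hv : Valid G ψ p) (hmin : ∀ q, Valid G ψ q → Nsing G ψ t p ≤ Nsing G ψ t q)
    {a b : V} (hadj : G.Adj a b) (hbit : bitAt ψ (lvl ψ a b) b = true)
    (c : Sym2 V → Fin (3 * t))
    (hc : ∀ f ∈ (SimpleGraph.fromEdgeSet (Efam G ψ p)).edgeSet, (c f).val = cval G ψ p f) :
    CFSatisfies (SimpleGraph.fromEdgeSet (Efam G ψ p)) c s(a, b) := by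
  have hne := bit_ne (ψ := ψ) (hprop hadj)
  have hba : bitAt ψ (lvl ψ a b) a = false := by
    cases h : bitAt ψ (lvl ψ a b) a
    · rfl
    · exact absurd (h.trans hbit.symm) hne
  have hCb : Cand G ψ b (lvl ψ a b) := ⟨hbit, a, hadj, rfl⟩
  have hvz := hv b (lvl ψ a b) hCb
  have hbPz : b ∈ petal G ψ p (p b (lvl ψ a b)) (lvl ψ a b) :=
    mem_petal.2 ⟨hbit, hvz.1, hvz.2, rfl⟩
  -- key characterization of candidate edges
  have key : ∀ f, f ∈ (SimpleGraph.fromEdgeSet (Efam G ψ p)).edgeSet →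
      (∃ x ∈ s(a, b), x ∈ f) → ∀ r : ℕ, r ≤ 2 → (c f).val = 3 * lvl ψ a b + r →
      (∃ w ∈ petal G ψ p a (lvl ψ a b), f = s(a, w) ∧ rank (petal G ψ p a (lvl ψ a b)) w = r)
        ∨ (f = s(p b (lvl ψ a b), b) ∧
            rank (petal G ψ p (p b (lvl ψ a b)) (lvl ψ a b)) b = r) := by
    intro f hf hinc r hr hcf
    obtain ⟨b', i, hc', rfl⟩ := exists_of_mem_H hf
    rw [hc _ hf, cval_edge hprop hv hc'] at hcf
    have hrk_le := rank_le_two (petal G ψ p (p b' i) i) b'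
    have hiL : i = lvl ψ a b := by omega
    subst hiL
    have hvb' := hv b' (lvl ψ a b) hc'
    have hrr : rank (petal G ψ p (p b' (lvl ψ a b)) (lvl ψ a b)) b' = r := by omega
    obtain ⟨x, hx1, hx2⟩ := hinc
    rw [Sym2.mem_iff] at hx1 hx2
    rcases hx1 with rfl | rfl
    · rcases hx2 with hx | hx
      · left
        rw [← hx] at hvb' hrr
        exact ⟨b', mem_petal.2 ⟨hc'.1, hvb'.1, hvb'.2, hx.symm⟩, by rw [← hx], hrr⟩
      · rw [← hx] at hc'
        simp [hc'.1] at hba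
    · rcases hx2 with hx | hx
      · -- b = p b' (lvl ψ a b) : impossible, both bits true
        have hne' := bit_ne (ψ := ψ) (hprop hvb'.1)
        rw [hvb'.2, ← hx] at hne'
        exact absurd (hbit.trans hc'.1.symm) hne'
      · right
        rw [← hx] at hc' hrr ⊢
        exact ⟨rfl, hrr⟩
  -- building block for witnesses from the star of `a`
  have mkW : ∀ w ∈ petal G ψ p a (lvl ψ a b),
      s(a, w) ∈ (SimpleGraph.fromEdgeSet (Efam G ψ p)).edgeSet ∧
        (c s(a, w)).val = 3 * lvl ψ a b + rank (petal G ψ p a (lvl ψ a b)) w := by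
    intro w hw
    obtain ⟨hb1, hb2, hb3, hb4⟩ := mem_petal.1 hw
    have hcw : Cand G ψ w (lvl ψ a b) := ⟨hb1, a, hb2, hb3⟩
    have hmem := mem_H_edgeSet hv hcw
    have hval := cval_edge hprop hv hcw
    rw [hb4] at hmem hval
    exact ⟨hmem, by rw [hc _ hmem, hval]⟩
  have hmemz := mem_H_edgeSet hv hCb
  have hvalz : (c s(p b (lvl ψ a b), b)).val =
      3 * lvl ψ a b + rank (petal G ψ p (p b (lvl ψ a b)) (lvl ψ a b)) b := by
    rw [hc _ hmemz, cval_edge hprop hv hCb]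
  by_cases hza : p b (lvl ψ a b) = a
  · -- the centre chosen by `b` is `a` itself
    have hbPa : b ∈ petal G ψ p a (lvl ψ a b) := mem_petal.2 ⟨hbit, hadj, rfl, hza⟩
    by_cases h2 : 2 ≤ (petal G ψ p a (lvl ψ a b)).card
    · obtain ⟨w0, hw0, hr0⟩ := rank_exists h2 (r := 0) (by norm_num)
      obtain ⟨hmem0, hval0⟩ := mkW w0 hw0
      refine ⟨c s(a, w0), s(a, w0), ⟨hmem0, ⟨a, by simp, by simp⟩, rfl⟩, ?_⟩
      rintro f ⟨hfH, hfinc, hfc⟩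
      have hval : (c f).val = 3 * lvl ψ a b + 0 := by
        rw [hfc, hval0, hr0]
      rcases key f hfH hfinc 0 (by norm_num) hval with ⟨w, hw, rfl, hrw⟩ | ⟨rfl, hrz⟩
      · rw [rank_inj hw hw0 (hrw.trans hr0.symm) (by omega)]
      · rw [hza] at hrz ⊢
        rw [rank_inj hbPa hw0 (hrz.trans hr0.symm) (by omega)]
    · have hcard1 : (petal G ψ p a (lvl ψ a b)).card ≤ 1 := by omega
      obtain ⟨hmem0, hval0⟩ := mkW b hbPa
      refine ⟨c s(a, b), s(a, b), ⟨hmem0, ⟨a, by simp, by simp⟩, rfl⟩, ?_⟩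
      rintro f ⟨hfH, hfinc, hfc⟩
      have hval : (c f).val = 3 * lvl ψ a b + rank (petal G ψ p a (lvl ψ a b)) b := by
        rw [hfc, hval0]
      rcases key f hfH hfinc _ (rank_le_two _ _) hval with ⟨w, hw, rfl, hrw⟩ | ⟨rfl, hrz⟩
      · rw [Finset.card_le_one.1 hcard1 w hw b hbPa]
      · rw [hza]
  · -- the centre chosen by `b` is different from `a`
    have hbnPa : b ∉ petal G ψ p a (lvl ψ a b) := fun h => hza (mem_petal.1 h).2.2.2
    rcases Nat.lt_or_ge (petal G ψ p a (lvl ψ a b)).card 2 with hlt2 | h2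
    · rcases Nat.lt_or_ge (petal G ψ p a (lvl ψ a b)).card 1 with hlt1 | hge1
      · -- empty star at `a`
        have hPae : petal G ψ p a (lvl ψ a b) = ∅ := Finset.card_eq_zero.1 (by omega)
        refine ⟨c s(p b (lvl ψ a b), b), s(p b (lvl ψ a b), b),
          ⟨hmemz, ⟨b, by simp, by simp⟩, rfl⟩, ?_⟩
        rintro f ⟨hfH, hfinc, hfc⟩
        have hval : (c f).val = 3 * lvl ψ a b +
            rank (petal G ψ p (p b (lvl ψ a b)) (lvl ψ a b)) b := by
          rw [hfc, hvalz]
        rcases key f hfH hfinc _ (rank_le_two _ _) hval with ⟨w, hw, rfl, hrw⟩ | ⟨rfl, hrz⟩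
        · rw [hPae] at hw; exact absurd hw (Finset.notMem_empty w)
        · rfl
      · -- singleton star at `a`
        have hcard1 : (petal G ψ p a (lvl ψ a b)).card = 1 := by omega
        have hρ := no_bad hprop hψ hv hmin hadj hbit hza hcard1
        obtain ⟨x, hx⟩ := Finset.card_eq_one.1 hcard1
        have hxPa : x ∈ petal G ψ p a (lvl ψ a b) := by rw [hx]; exact Finset.mem_singleton_self x
        have hrkx : rank (petal G ψ p a (lvl ψ a b)) x = 2 :=
          rank_of_card_le_one (by omega) x
        obtain ⟨hmem0, hval0⟩ := mkW x hxPa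
        refine ⟨c s(a, x), s(a, x), ⟨hmem0, ⟨a, by simp, by simp⟩, rfl⟩, ?_⟩
        rintro f ⟨hfH, hfinc, hfc⟩
        have hval : (c f).val = 3 * lvl ψ a b + 2 := by
          rw [hfc, hval0, hrkx]
        rcases key f hfH hfinc 2 (le_refl 2) hval with ⟨w, hw, rfl, hrw⟩ | ⟨rfl, hrz⟩
        · rw [hx] at hw
          rw [Finset.mem_singleton.1 hw]
        · exact absurd hrz hρ
    · -- big star at `a`
      set ρ := rank (petal G ψ p (p b (lvl ψ a b)) (lvl ψ a b)) b with hρdef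
      obtain ⟨w0, hw0, hr0⟩ := rank_exists h2 (r := if ρ = 0 then 1 else 0)
        (by split <;> norm_num)
      obtain ⟨hmem0, hval0⟩ := mkW w0 hw0
      refine ⟨c s(a, w0), s(a, w0), ⟨hmem0, ⟨a, by simp, by simp⟩, rfl⟩, ?_⟩
      rintro f ⟨hfH, hfinc, hfc⟩
      have hval : (c f).val = 3 * lvl ψ a b + (if ρ = 0 then 1 else 0) := by
        rw [hfc, hval0, hr0]
      rcases key f hfH hfinc _ (by split <;> norm_num) hval with ⟨w, hw, rfl, hrw⟩ | ⟨rfl, hrz⟩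
      · rw [rank_inj hw hw0 (hrw.trans hr0.symm) (by split_ifs at hrw ⊢ <;> omega)]
      · exfalso
        split_ifs at hrz <;> omega

theorem construction [Nonempty V] (G : SimpleGraph V) (ψ : V → ℕ) (t : ℕ)
    (hprop : ∀ {u v : V}, G.Adj u v → ψ u ≠ ψ v) (hψ : ∀ v, ψ v < 2 ^ t) (ht : 0 < t) :
    ∃ H, H ≤ G ∧ ∃ c : Sym2 V → Fin (3 * t), ∀ e ∈ G.edgeSet, CFSatisfies H c e := by
  have hex : ∃ p, Valid G ψ p := by
    classical
    refine ⟨fun b i => if h : Cand G ψ b i then h.2.choose else Classical.arbitrary V, ?_⟩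
    intro b i hc
    beta_reduce
    rw [dif_pos hc]
    exact hc.2.choose_spec
  obtain ⟨p₀, hp₀⟩ := hex
  have hSne : {n | ∃ p, Valid G ψ p ∧ Nsing G ψ t p = n}.Nonempty := ⟨_, p₀, hp₀, rfl⟩
  obtain ⟨p, hvp, hNp⟩ := Nat.sInf_mem hSne
  have hmin : ∀ q, Valid G ψ q → Nsing G ψ t p ≤ Nsing G ψ t q := fun q hq =>
    hNp ▸ Nat.sInf_le ⟨q, hq, rfl⟩
  refine ⟨SimpleGraph.fromEdgeSet (Efam G ψ p), H_le hvp,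
    fun f => if h : cval G ψ p f < 3 * t then ⟨cval G ψ p f, h⟩ else ⟨0, by omega⟩, ?_⟩
  have hc : ∀ f ∈ (SimpleGraph.fromEdgeSet (Efam G ψ p)).edgeSet,
      ((fun f => if h : cval G ψ p f < 3 * t then (⟨cval G ψ p f, h⟩ : Fin (3 * t))
        else ⟨0, by omega⟩) f).val = cval G ψ p f := by
    intro f hf
    obtain ⟨b, i, hcand, rfl⟩ := exists_of_mem_H hf
    have hlt : cval G ψ p s(p b i, b) < 3 * t := by
      rw [cval_edge hprop hvp hcand]
      have h1 := cand_lvl_lt hprop hψ hcand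
      have h2 := rank_le_two (petal G ψ p (p b i) i) b
      omega
    simp only [dif_pos hlt]
  intro e he
  revert he
  refine Sym2.ind (fun u v he => ?_) e
  rw [SimpleGraph.mem_edgeSet] at he
  have hne := bit_ne (ψ := ψ) (hprop he)
  by_cases hb : bitAt ψ (lvl ψ u v) v = true
  · exact sat hprop hψ hvp hmin he hb _ hc
  · have hbu : bitAt ψ (lvl ψ v u) u = true := by
      rw [lvl_symm ψ v u]
      cases h : bitAt ψ (lvl ψ u v) u
      · cases h2 : bitAt ψ (lvl ψ u v) v
        · rw [h, h2] at hne; exact absurd rfl hne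
        · exact absurd h2 hb
      · rfl
    have := sat hprop hψ hvp hmin he.symm hbu _ hc
    rwa [Sym2.eq_swap] at this

end Main

end CFAux

open CFAux in
/-- Every finite nonempty simple graph without isolated vertices satisfies
`χ'_sCF(G) ≤ 3⌈log₂ χ(G)⌉`. -/
theorem scfChromIndex_le_three_clog_chromaticNumber {V : Type*} [Fintype V] [Nonempty V]
    (G : SimpleGraph V) (hNoIso : ∀ v : V, ∃ w : V, G.Adj v w) :
    scfChromIndex G ≤ 3 * Nat.clog 2 G.chromaticNumber.toNat := by
  have hcol0 : G.Colorable G.chromaticNumber.toNat := colorable_chromaticNumber_of_fintype G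
  have hedge : ∃ u v, G.Adj u v := ⟨Classical.arbitrary V, hNoIso _⟩
  have h2n : 2 ≤ G.chromaticNumber.toNat := by
    by_contra h
    push_neg at h
    have hc1 : G.Colorable 1 := hcol0.mono (by omega)
    obtain ⟨u, v, huv⟩ := hedge
    obtain ⟨C⟩ := hc1
    exact C.valid huv (Subsingleton.elim _ _)
  have ht : 0 < Nat.clog 2 G.chromaticNumber.toNat := Nat.clog_pos one_lt_two h2n
  have hcol : G.Colorable (2 ^ Nat.clog 2 G.chromaticNumber.toNat) :=
    hcol0.mono (Nat.le_pow_clog one_lt_two _)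
  obtain ⟨C⟩ := hcol
  letI : LinearOrder V := LinearOrder.lift' (Fintype.equivFin V) (Equiv.injective _)
  have hprop : ∀ {u v : V}, G.Adj u v → (fun x => ((C x : Fin _) : ℕ)) u ≠
      (fun x => ((C x : Fin _) : ℕ)) v := fun h hEq => C.valid h (Fin.val_injective hEq)
  have hψ : ∀ v, (fun x => ((C x : Fin _) : ℕ)) v < 2 ^ Nat.clog 2 G.chromaticNumber.toNat :=
    fun v => (C v).isLt
  obtain ⟨H, hle, c, hsat⟩ := construction G _ _ hprop hψ ht
  exact Nat.sInf_le ⟨H, hle, c, hsat⟩
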